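/- arXiv:2108.00197 — 2 statements merged into one kernel-verified Lean document; each statement's English description precedes it below -/
import Mathlib

section
/- Under the hypotheses of the previous item, for the two-particle jump chain $\hat X$ one has for all $i,j\in\mathbb{Z}^d$ and $n\ge 1$: $\hat{\mathbb{P}}^{[(i,1),(i,1)]}(\hat X_{2n} = [(j,1),(j,1)]) \ge m^{2n} a_n(i,j)^2$, and consequently the expected number of visits to $[(j,1),(j,1)]$ from $[(i,1),(i,1)]$ satisfies $\hat{\mathbb{E}}^{[(i,1),(i,1)]}[\hat R_j] \ge \sum_{n\ge 1} m^{2n} a_n(i,j)^2$. -/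
open scoped ENNReal

/-- `n`-fold composition of a transition kernel on a countable space. -/
noncomputable def aIter {α : Type*} [DecidableEq α] (a1 : α → α → ℝ≥0∞) : ℕ → α → α → ℝ≥0∞
  | 0 => fun i j => if i = j then 1 else 0
  | n + 1 => fun i j => ∑' l, aIter a1 n i l * a1 l j

private lemma comp_lemma {S : Type*} [DecidableEq S] (P : ℕ → S → S → ℝ≥0∞)
    (hP0 : ∀ a b, P 0 a b = if a = b then 1 else 0)
    (hCK : ∀ n a b, P (n + 1) a b = ∑' c, P 1 a c * P n c b) :
    ∀ n k a b, P (n + k) a b = ∑' c, P n a c * P k c b := by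
  intro n
  induction n with
  | zero =>
    intro k a b
    simp only [Nat.zero_add, hP0]
    have : (∑' c, (if a = c then (1:ℝ≥0∞) else 0) * P k c b)
        = ∑' c, (if c = a then P k c b else 0) := by
      refine tsum_congr fun c => ?_
      by_cases h : a = c <;> simp [h, eq_comm]
    rw [this, tsum_eq_single a (fun b' hb => by simp [hb])]; simp
  | succ n ih =>
    intro k a b
    have h1 : n + 1 + k = (n + k) + 1 := by omega
    rw [h1, hCK]
    calc ∑' c, P 1 a c * P (n + k) c b
        = ∑' c, P 1 a c * ∑' e, P n c e * P k e b := by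
          exact tsum_congr fun c => by rw [ih]
      _ = ∑' c, ∑' e, P 1 a c * (P n c e * P k e b) := by
          exact tsum_congr fun c => (ENNReal.tsum_mul_left).symm
      _ = ∑' e, ∑' c, P 1 a c * P n c e * P k e b := by
          rw [ENNReal.tsum_comm]
          exact tsum_congr fun e => tsum_congr fun c => by ring
      _ = ∑' e, (∑' c, P 1 a c * P n c e) * P k e b := by
          exact tsum_congr fun e => ENNReal.tsum_mul_right
      _ = ∑' e, P (n + 1) a e * P k e b := by
          exact tsum_congr fun e => by rw [hCK]

private lemma coord_lemma {d : ℕ} {S : Type*} [DecidableEq S] (P : ℕ → S → S → ℝ≥0∞)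
    (a1 : (Fin d → ℤ) → (Fin d → ℤ) → ℝ≥0∞)
    (ha1diag : ∀ i, a1 i i = 0) (m : ℝ≥0∞)
    (hP0 : ∀ a b, P 0 a b = if a = b then 1 else 0)
    (hCK : ∀ n a b, P (n + 1) a b = ∑' c, P 1 a c * P n c b)
    (g : (Fin d → ℤ) → S) (hg : Function.Injective g)
    (hstep : ∀ (i l : Fin d → ℤ), l ≠ i → m * a1 i l ≤ P 1 (g i) (g l)) :
    ∀ n i j, m ^ n * aIter a1 n i j ≤ P n (g i) (g j) := by
  intro n
  induction n with
  | zero =>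
    intro i j
    simp only [aIter, hP0, pow_zero, one_mul, hg.eq_iff]
    exact le_rfl
  | succ n ih =>
    intro i j
    have comp := comp_lemma P hP0 hCK n 1 (g i) (g j)
    rw [comp]
    have heq : m ^ (n+1) * aIter a1 (n+1) i j
        = ∑' l, (m ^ n * aIter a1 n i l) * (m * a1 l j) := by
      rw [show aIter a1 (n+1) i j = ∑' l, aIter a1 n i l * a1 l j from rfl,
        ← ENNReal.tsum_mul_left]
      exact tsum_congr fun l => by ring
    rw [heq]
    calc ∑' l, (m ^ n * aIter a1 n i l) * (m * a1 l j)
        ≤ ∑' l, P n (g i) (g l) * P 1 (g l) (g j) := by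
          refine ENNReal.tsum_le_tsum fun l => ?_
          by_cases h : l = j
          · subst h; simp [ha1diag]
          · exact mul_le_mul' (ih i l) (hstep l j (Ne.symm h))
      _ ≤ ∑' c, P n (g i) c * P 1 c (g j) :=
          ENNReal.tsum_comp_le_tsum_of_injective hg _

/-- Under the hypotheses of the single-coordinate lower bound (both particles' migration
steps in the jump chain `X̂` dominate `m · a₁`), one has for all `i, j ∈ ℤ^d` and `n ≥ 1`:
`P̂^{[(i,1),(i,1)]}(X̂ (2n) = [(j,1),(j,1)]) ≥ m^{2n} a_n(i,j)²`, and consequently the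
expected number of visits `Ê^{[(i,1),(i,1)]}[R̂_j] = ∑_{n≥0} P n [(i,1),(i,1)] [(j,1),(j,1)]`
is at least `∑_{n≥1} m^{2n} a_n(i,j)²`. -/
theorem stmt_9 {d : ℕ}
    (P : ℕ → (((Fin d → ℤ) × Bool) × ((Fin d → ℤ) × Bool)) →
      (((Fin d → ℤ) × Bool) × ((Fin d → ℤ) × Bool)) → ℝ≥0∞)
    (a1 : (Fin d → ℤ) → (Fin d → ℤ) → ℝ≥0∞)
    (ha1prob : ∀ i, ∑' l, a1 i l = 1) (ha1diag : ∀ i, a1 i i = 0)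
    (m : ℝ≥0∞) (hm0 : 0 < m) (hm1 : m < 1)
    (hP0 : ∀ a b, P 0 a b = if a = b then 1 else 0)
    (hCK : ∀ n a b, P (n + 1) a b = ∑' c, P 1 a c * P n c b)
    (hstep₂ : ∀ (k i l : Fin d → ℤ), l ≠ i →
      m * a1 i l ≤ P 1 ((k, true), (i, true)) ((k, true), (l, true)))
    (hstep₁ : ∀ (k i l : Fin d → ℤ), l ≠ i →
      m * a1 i l ≤ P 1 ((i, true), (k, true)) ((l, true), (k, true))) :
    (∀ n : ℕ, 1 ≤ n → ∀ i j : Fin d → ℤ,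
      m ^ (2 * n) * (aIter a1 n i j) ^ 2 ≤
        P (2 * n) ((i, true), (i, true)) ((j, true), (j, true))) ∧
    (∀ i j : Fin d → ℤ,
      (∑' n : ℕ, m ^ (2 * (n + 1)) * (aIter a1 (n + 1) i j) ^ 2) ≤
        ∑' n : ℕ, P n ((i, true), (i, true)) ((j, true), (j, true))) := by
  have key : ∀ n : ℕ, ∀ i j : Fin d → ℤ,
      m ^ (2 * n) * (aIter a1 n i j) ^ 2 ≤
        P (2 * n) ((i, true), (i, true)) ((j, true), (j, true)) := by
    intro n i j
    have hg2 : Function.Injective (fun l : Fin d → ℤ => (((i, true), (l, true)) :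
        ((Fin d → ℤ) × Bool) × ((Fin d → ℤ) × Bool))) := by
      intro x y h
      simpa using h
    have hg1 : Function.Injective (fun l : Fin d → ℤ => (((l, true), (j, true)) :
        ((Fin d → ℤ) × Bool) × ((Fin d → ℤ) × Bool))) := by
      intro x y h
      simpa using h
    have h2 := coord_lemma P a1 ha1diag m hP0 hCK _ hg2
      (fun a b hb => hstep₂ i a b hb) n i j
    have h1 := coord_lemma P a1 ha1diag m hP0 hCK _ hg1
      (fun a b hb => hstep₁ j a b hb) n i j
    have comp := comp_lemma P hP0 hCK n n ((i, true), (i, true)) ((j, true), (j, true))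
    have h2n : 2 * n = n + n := by omega
    rw [h2n, comp]
    have hle : m ^ (n + n) * (aIter a1 n i j) ^ 2
        ≤ P n ((i, true), (i, true)) ((i, true), (j, true))
          * P n ((i, true), (j, true)) ((j, true), (j, true)) := by
      have : m ^ (n + n) * (aIter a1 n i j) ^ 2
          = (m ^ n * aIter a1 n i j) * (m ^ n * aIter a1 n i j) := by
        rw [pow_add, sq]; ring
      rw [this]
      exact mul_le_mul' h2 h1
    exact hle.trans (ENNReal.le_tsum _)
  refine ⟨fun n _ => key n, fun i j => ?_⟩
  calc (∑' n : ℕ, m ^ (2 * (n + 1)) * (aIter a1 (n + 1) i j) ^ 2)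
      ≤ ∑' n : ℕ, P (2 * (n + 1)) ((i, true), (i, true)) ((j, true), (j, true)) :=
        ENNReal.tsum_le_tsum fun n => key (n + 1) i j
    _ ≤ ∑' n : ℕ, P n ((i, true), (i, true)) ((j, true), (j, true)) := by
        exact ENNReal.tsum_comp_le_tsum_of_injective
          (fun a b h => by dsimp only at h; omega : Function.Injective fun n : ℕ => 2 * (n + 1)) _
end

section
/- Suppose the active population sizes $(N_i)_{i\in\mathbb{Z}^d}$ satisfy the non-clumping condition $\inf_{i\in\mathbb{Z}^d}\sum_{\|j-i\|\le R} 1/N_j > 0$ for some $R<\infty$. Suppose further that for all $i,j$, $\hat{\mathbb{E}}^{[(i,1),(i,1)]}[\hat R_j] \ge \sum_{n\ge 1} m^{2n} a_n(i,j)^2$ with $m\in(0,1)$, the kernel $a_n(0,\cdot)$ is translation-invariant ($a_n(i,j)=a_n(0,j-i)$), and $\sum_{n\ge 1} m^{2n} a_n(0,l)^2 > 0$ for every $l$ with $\|l\|\le R$. Then $\inf_{i\in\mathbb{Z}^d} \hat\nu([(i,1),(i,1)]) > 0$, where $\hat\nu([(i,1),(i,1)]) = \sum_{j} \frac{1}{2(c+\lambda)N_j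 + 1}\hat{\mathbb{E}}^{[(i,1),(i,1)]}[\hat R_j]$. -/
open scoped ENNReal

/-- Non-clumping lower bound (Theorem 3.14(a)): if the active population sizes
`N : ℤ^d → ℕ` are non-clumping, the expected visit numbers satisfy
`Ê^{[(i,1),(i,1)]}[R̂_j] ≥ ∑_{n≥1} m^{2n} a_n(i,j)²` for a translation-invariant kernel
`a_n(i,j) = a n (j - i)` with `∑_{n≥1} m^{2n} a_n(0,l)² > 0` for all `‖l‖ ≤ R`, then the
absorption probabilities, given by the series representation
`ν̂([(i,1),(i,1)]) = ∑_j (2(c+λ)N_j + 1)⁻¹ Ê^{[(i,1),(i,1)]}[R̂_j]`, are bounded away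
from `0` uniformly in `i`. -/
theorem stmt_10 {d : ℕ}
    (N : (Fin d → ℤ) → ℕ) (hN : ∀ j, 2 ≤ N j)
    (c lam : ℝ≥0∞) (hc0 : 0 < c) (hc : c < ⊤) (hlam0 : 0 < lam) (hlam : lam < ⊤)
    (m : ℝ≥0∞) (hm0 : 0 < m) (hm1 : m < 1)
    (a : ℕ → (Fin d → ℤ) → ℝ≥0∞)
    (R : ℝ) (hR : 0 ≤ R)
    (hnc : 0 < ⨅ i : Fin d → ℤ,
      ∑' j : {j : Fin d → ℤ // ‖j - i‖ ≤ R}, ((N j.1 : ℝ≥0∞))⁻¹)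
    (E : (Fin d → ℤ) → (Fin d → ℤ) → ℝ≥0∞)
    (hE : ∀ i j : Fin d → ℤ,
      (∑' n : ℕ, m ^ (2 * (n + 1)) * (a (n + 1) (j - i)) ^ 2) ≤ E i j)
    (hpos : ∀ l : Fin d → ℤ, ‖l‖ ≤ R →
      0 < ∑' n : ℕ, m ^ (2 * (n + 1)) * (a (n + 1) l) ^ 2) :
    0 < ⨅ i : Fin d → ℤ,
      ∑' j : Fin d → ℤ, (2 * (c + lam) * (N j : ℝ≥0∞) + 1)⁻¹ * E i j := by
  classical
  set S : (Fin d → ℤ) → ℝ≥0∞ := fun l => ∑' n : ℕ, m ^ (2 * (n + 1)) * (a (n + 1) l) ^ 2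
    with hS
  set κ : ℝ≥0∞ := (2 * (c + lam) + 1)⁻¹ with hκ
  have hden_ne_top : 2 * (c + lam) + 1 ≠ ⊤ := by
    simp [ENNReal.add_ne_top, ENNReal.mul_ne_top, hc.ne, hlam.ne]
  have hκ0 : 0 < κ := ENNReal.inv_pos.mpr hden_ne_top
  -- finiteness of the ball
  have hfin : {l : Fin d → ℤ | ‖l‖ ≤ R}.Finite := by
    have hset : {l : Fin d → ℤ | ‖l‖ ≤ R} = Metric.closedBall 0 R := by
      ext l; simp [Metric.mem_closedBall, dist_zero_right]
    rw [hset]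
    exact (isCompact_closedBall (0 : Fin d → ℤ) R).finite_of_discrete
  haveI : Finite {l : Fin d → ℤ // ‖l‖ ≤ R} := hfin.to_subtype
  set ε : ℝ≥0∞ := ⨅ l : {l : Fin d → ℤ // ‖l‖ ≤ R}, S l.1 with hε
  have hε0 : 0 < ε := by
    rcases isEmpty_or_nonempty {l : Fin d → ℤ // ‖l‖ ≤ R} with h | h
    · simp [hε, iInf_of_empty]
    · obtain ⟨x, hx⟩ := Finite.exists_min (fun l : {l : Fin d → ℤ // ‖l‖ ≤ R} => S l.1)
      exact lt_of_lt_of_le (hpos x.1 x.2) (le_iInf hx)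
  set I : ℝ≥0∞ := ⨅ i : Fin d → ℤ,
      ∑' j : {j : Fin d → ℤ // ‖j - i‖ ≤ R}, ((N j.1 : ℝ≥0∞))⁻¹ with hI
  have key : ∀ i : Fin d → ℤ, κ * ε * I ≤
      ∑' j : Fin d → ℤ, (2 * (c + lam) * (N j : ℝ≥0∞) + 1)⁻¹ * E i j := by
    intro i
    have h1 : κ * ε * I ≤ κ * ε *
        ∑' j : {j : Fin d → ℤ // ‖j - i‖ ≤ R}, ((N j.1 : ℝ≥0∞))⁻¹ :=
      mul_le_mul_right (iInf_le _ i) _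
    refine h1.trans ?_
    rw [← ENNReal.tsum_mul_left]
    have h2 : ∀ j : {j : Fin d → ℤ // ‖j - i‖ ≤ R},
        κ * ε * ((N j.1 : ℝ≥0∞))⁻¹ ≤
        (2 * (c + lam) * (N j.1 : ℝ≥0∞) + 1)⁻¹ * E i j.1 := by
      intro j
      have hNj : (1 : ℝ≥0∞) ≤ (N j.1 : ℝ≥0∞) := by
        exact_mod_cast Nat.one_le_of_lt (hN j.1)
      have hinv : κ * ((N j.1 : ℝ≥0∞))⁻¹ ≤ (2 * (c + lam) * (N j.1 : ℝ≥0∞) + 1)⁻¹ := by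
        rw [← ENNReal.mul_inv (Or.inr (by simp)) (Or.inl hden_ne_top)]
        apply ENNReal.inv_le_inv.mpr
        calc 2 * (c + lam) * (N j.1 : ℝ≥0∞) + 1
            ≤ 2 * (c + lam) * (N j.1 : ℝ≥0∞) + (N j.1 : ℝ≥0∞) := by
              exact add_le_add_right hNj _
          _ = (2 * (c + lam) + 1) * (N j.1 : ℝ≥0∞) := by ring
      have hεE : ε ≤ E i j.1 := by
        refine le_trans (iInf_le _ ⟨j.1 - i, ?_⟩) (hE i j.1)
        simpa using j.2
      calc κ * ε * ((N j.1 : ℝ≥0∞))⁻¹ = (κ * ((N j.1 : ℝ≥0∞))⁻¹) * ε := by ring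
        _ ≤ (2 * (c + lam) * (N j.1 : ℝ≥0∞) + 1)⁻¹ * E i j.1 :=
            mul_le_mul' hinv hεE
    refine (ENNReal.tsum_le_tsum h2).trans ?_
    have := tsum_subtype {j : Fin d → ℤ | ‖j - i‖ ≤ R}
      (fun j => (2 * (c + lam) * (N j : ℝ≥0∞) + 1)⁻¹ * E i j)
    exact this.trans_le (ENNReal.tsum_le_tsum fun j => Set.indicator_le_self _ _ j)
  have hpos' : 0 < κ * ε * I :=
    ENNReal.mul_pos (ENNReal.mul_pos hκ0.ne' hε0.ne').ne' hnc.ne'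
  exact lt_of_lt_of_le hpos' (le_iInf key)
end
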